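/- Let 𝔫 be a finite-dimensional Lie algebra over ℚ, and let ℚ̄ be an algebraic closure of ℚ. Then: (i) the Lie algebra ℂ ⊗_ℚ 𝔫 admits a special grading if and only if ℚ̄ ⊗_ℚ 𝔫 admits a special grading; and (ii) the Lie algebra ℂ ⊗_ℚ 𝔫 admits a very special grading if and only if ℚ̄ ⊗_ℚ 𝔫 admits a very special grading. -/

import Mathlib

open TensorProduct

/-- A (ℤ-)grading of a Lie algebra `𝔪` over `K`: a direct sum decomposition
`𝔪 = ⊕_{k ∈ ℤ} 𝔪ₖ` with `⁅𝔪ᵢ, 𝔪ⱼ⁆ ⊆ 𝔪ᵢ₊ⱼ`. -/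
def IsLieGrading (K 𝔪 : Type*) [CommRing K] [LieRing 𝔪] [LieAlgebra K 𝔪]
    (p : ℤ → Submodule K 𝔪) : Prop :=
  DirectSum.IsInternal p ∧
    ∀ (i j : ℤ), ∀ x ∈ p i, ∀ y ∈ p j, ⁅x, y⁆ ∈ p (i + j)

/-- A Lie algebra admits a *special* grading if it has a grading with `𝔪₀ ∩ 𝔷 = 0`,
where `𝔷` is the center. -/
def HasSpecialGrading (K 𝔪 : Type*) [CommRing K] [LieRing 𝔪] [LieAlgebra K 𝔪] : Prop :=
  ∃ p : ℤ → Submodule K 𝔪, IsLieGrading K 𝔪 p ∧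
    p 0 ⊓ (LieAlgebra.center K 𝔪).toSubmodule = ⊥

/-- A Lie algebra admits a *very special* grading if it has a grading with `𝔪₀ = 0`. -/
def HasVerySpecialGrading (K 𝔪 : Type*) [CommRing K] [LieRing 𝔪] [LieAlgebra K 𝔪] : Prop :=
  ∃ p : ℤ → Submodule K 𝔪, IsLieGrading K 𝔪 p ∧ p 0 = ⊥

/-- A Lie algebra admits a *non-negative special* grading if it has a grading with
`𝔪ₖ = 0` for `k < 0` and `𝔪₀ ∩ 𝔷 = 0`. -/
def HasNonnegSpecialGrading (K 𝔪 : Type*) [CommRing K] [LieRing 𝔪] [LieAlgebra K 𝔪] : Prop :=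
  ∃ p : ℤ → Submodule K 𝔪, IsLieGrading K 𝔪 p ∧ (∀ k < 0, p k = ⊥) ∧
    p 0 ⊓ (LieAlgebra.center K 𝔪).toSubmodule = ⊥

/-- A Lie algebra admits a *positive* grading if it has a grading with
`𝔪ₖ = 0` for `k ≤ 0`. -/
def HasPositiveGrading (K 𝔪 : Type*) [CommRing K] [LieRing 𝔪] [LieAlgebra K 𝔪] : Prop :=
  ∃ p : ℤ → Submodule K 𝔪, IsLieGrading K 𝔪 p ∧ ∀ k ≤ 0, p k = ⊥


set_option linter.unusedSectionVars false
set_option maxHeartbeats 1000000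
set_option synthInstance.maxHeartbeats 400000
set_option maxRecDepth 4000

open scoped DirectSum

namespace XG

variable {𝔫 : Type*} [LieRing 𝔫] [LieAlgebra ℚ 𝔫]
variable {ι : Type*} [Fintype ι] [DecidableEq ι]

noncomputable def sc (e : Module.Basis ι ℚ 𝔫) (a b d : ι) : ℚ := e.repr ⁅e a, e b⁆ d

noncomputable def Br (R : Type*) [CommRing R] [Algebra ℚ R] (e : Module.Basis ι ℚ 𝔫)
    (x y : ι → R) (d : ι) : R :=
  ∑ a, ∑ b, x a * y b * algebraMap ℚ R (sc e a b d)

noncomputable def Cm (R : Type*) [CommRing R] [Algebra ℚ R] (e : Module.Basis ι ℚ 𝔫) (b : ι) :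
    Matrix ι ι R :=
  Matrix.of fun d a => algebraMap ℚ R (sc e a b d)

def GradEqs (K : Type*) [CommRing K] [Algebra ℚ K] (e : Module.Basis ι ℚ 𝔫) (S : Finset ℤ)
    (P : ℤ → Matrix ι ι K) : Prop :=
  (∀ k ∉ S, P k = 0) ∧ (∑ s ∈ S, P s = 1) ∧
  (∀ s t, P s * P t = if s = t then P s else 0) ∧
  (∀ i ∈ S, ∀ j ∈ S, ∀ a b : ι,
    (P (i+j)).mulVec (Br K e (fun a' => P i a' a) (fun b' => P j b' b)) =
      Br K e (fun a' => P i a' a) (fun b' => P j b' b))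

def CentEqB (K : Type*) [CommRing K] [Algebra ℚ K] (e : Module.Basis ι ℚ 𝔫) (P0 : Matrix ι ι K)
    (B : Option ι → Matrix ι ι K) : Prop :=
  B none * (1 - P0) + ∑ b, B (some b) * Cm K e b = 1

variable (K : Type*) [Field K] [Algebra ℚ K]

noncomputable def bK (e : Module.Basis ι ℚ 𝔫) : Module.Basis ι K (K ⊗[ℚ] 𝔫) :=
  Algebra.TensorProduct.basis K e

lemma lie_bK (e : Module.Basis ι ℚ 𝔫) (a b : ι) :
    ⁅bK K e a, bK K e b⁆ = ∑ d, algebraMap ℚ K (sc e a b d) • bK K e d := by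
  classical
  rw [bK, Algebra.TensorProduct.basis_apply, Algebra.TensorProduct.basis_apply,
    LieAlgebra.ExtendScalars.bracket_tmul, one_mul]
  conv_lhs => rw [← Module.Basis.sum_repr e ⁅e a, e b⁆]
  rw [tmul_sum]
  refine Finset.sum_congr rfl fun d _ => ?_
  rw [tmul_smul, Algebra.TensorProduct.basis_apply, algebra_compatible_smul K, sc]

lemma sum_lie' {L : Type*} [LieRing L] {α : Type*} (s : Finset α) (f : α → L) (y : L) :
    ⁅∑ i ∈ s, f i, y⁆ = ∑ i ∈ s, ⁅f i, y⁆ :=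
  map_sum (AddMonoidHom.mk' (fun x => ⁅x, y⁆) fun a b => add_lie a b y) f s

lemma lie_sum' {L : Type*} [LieRing L] {α : Type*} (s : Finset α) (f : α → L) (x : L) :
    ⁅x, ∑ i ∈ s, f i⁆ = ∑ i ∈ s, ⁅x, f i⁆ :=
  map_sum (AddMonoidHom.mk' (fun y => ⁅x, y⁆) fun a b => lie_add x a b) f s

lemma bracket_repr (e : Module.Basis ι ℚ 𝔫) (x y : K ⊗[ℚ] 𝔫) (d : ι) :
    (bK K e).repr ⁅x, y⁆ d = Br K e ((bK K e).repr x) ((bK K e).repr y) d := by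
  classical
  conv_lhs => rw [← Module.Basis.sum_repr (bK K e) x, ← Module.Basis.sum_repr (bK K e) y]
  rw [sum_lie']
  rw [map_sum, Finsupp.coe_finset_sum, Finset.sum_apply]
  rw [Br]
  refine Finset.sum_congr rfl fun a _ => ?_
  rw [lie_sum', map_sum, Finsupp.coe_finset_sum, Finset.sum_apply]
  refine Finset.sum_congr rfl fun b _ => ?_
  rw [smul_lie, lie_smul, lie_bK, smul_smul, map_smul, map_sum]
  simp [Finsupp.single_apply, mul_assoc]

lemma repr_toLin (e : Module.Basis ι ℚ 𝔫) (M : Matrix ι ι K) (x : K ⊗[ℚ] 𝔫) :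
    ⇑((bK K e).repr (Matrix.toLin (bK K e) (bK K e) M x)) =
      M.mulVec ((bK K e).repr x) := by
  rw [Matrix.toLin_apply, Module.Basis.repr_sum_self]

lemma repr_lie_bK (e : Module.Basis ι ℚ 𝔫) (x : K ⊗[ℚ] 𝔫) (b : ι) :
    ⇑((bK K e).repr ⁅x, bK K e b⁆) = (Cm K e b).mulVec ((bK K e).repr x) := by
  classical
  funext d
  rw [bracket_repr, Br]
  simp only [Module.Basis.repr_self, Cm, Matrix.mulVec, dotProduct, Matrix.of_apply,
    Finsupp.single_apply]
  simp only [mul_ite, ite_mul, mul_one, mul_zero, zero_mul, one_mul, Finset.sum_ite_eq,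
    Finset.mem_univ, if_true]
  exact Finset.sum_congr rfl fun a _ => mul_comm _ _

section FromMat

variable (e : Module.Basis ι ℚ 𝔫) {S : Finset ℤ} {P : ℤ → Matrix ι ι K}

lemma grading_of_matrices (hG : GradEqs K e S P) :
    IsLieGrading K (K ⊗[ℚ] 𝔫)
      (fun k => LinearMap.range (Matrix.toLin (bK K e) (bK K e) (P k))) ∧
    (∀ k ∉ S, LinearMap.range (Matrix.toLin (bK K e) (bK K e) (P k)) = ⊥) := by
  classical
  obtain ⟨h0, h1, h2, h3⟩ := hG
  set b := bK K e with hb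
  set π : ℤ → ((K ⊗[ℚ] 𝔫) →ₗ[K] (K ⊗[ℚ] 𝔫)) :=
    fun k => Matrix.toLin b b (P k) with hπ
  have hππ : ∀ s t x, π s (π t x) = if s = t then π t x else 0 := by
    intro s t x
    have : π s (π t x) = Matrix.toLin b b (P s * P t) x := by
      rw [Matrix.toLin_mul b b b, LinearMap.comp_apply]
    rw [this, h2]
    split
    · next h => subst h; rfl
    · simp
  have hsum : ∀ x, ∑ s ∈ S, π s x = x := by
    intro x
    have : (∑ s ∈ S, π s) = Matrix.toLin b b 1 := by
      rw [← h1, map_sum]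
    rw [← LinearMap.sum_apply, this, Matrix.toLin_one, LinearMap.id_apply]
  have hrangemem : ∀ k x, x ∈ LinearMap.range (π k) ↔ π k x = x := by
    intro k x
    constructor
    · rintro ⟨y, rfl⟩
      rw [hππ]; simp
    · intro h; exact ⟨x, h⟩
  have hbot : ∀ k ∉ S, LinearMap.range (π k) = ⊥ := by
    intro k hk
    rw [hπ]
    simp only [h0 k hk, map_zero, LinearMap.range_zero]
  refine ⟨⟨?_, ?_⟩, hbot⟩
  · -- IsInternal
    rw [DirectSum.isInternal_submodule_iff_iSupIndep_and_iSup_eq_top]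
    constructor
    · rw [iSupIndep_iff_dfinsupp_lsum_injective]
      rw [← LinearMap.ker_eq_bot, LinearMap.ker_eq_bot']
      intro f hf
      ext t
      have hf' : f.sum (fun i x => (x : K ⊗[ℚ] 𝔫)) = 0 := by
        simpa [DFinsupp.lsum_apply_apply, DFinsupp.sumAddHom_apply] using hf
      have h1' : π t (f.sum fun i x => (x : K ⊗[ℚ] 𝔫)) = 0 := by rw [hf', map_zero]
      rw [DFinsupp.sum, map_sum] at h1'
      have hterm : ∀ i ∈ f.support, π t ((f i : K ⊗[ℚ] 𝔫)) =
          if t = i then (f i : K ⊗[ℚ] 𝔫) else 0 := by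
        intro i _
        obtain ⟨y, hy⟩ := (f i).2
        conv_lhs => rw [← hy]
        rw [hππ]
        by_cases h : t = i <;> simp [h, hy, hπ]
      rw [Finset.sum_congr rfl hterm, Finset.sum_ite_eq] at h1'
      have hcf : (f t : K ⊗[ℚ] 𝔫) = 0 := by
        by_cases ht : t ∈ f.support
        · rwa [if_pos ht] at h1'
        · rw [DFinsupp.notMem_support_iff.mp ht]; rfl
      have hft : f t = 0 := by simpa using hcf
      simp [hft]
    · rw [eq_top_iff]
      intro x _
      rw [← hsum x]
      exact Submodule.sum_mem _ fun s _ =>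
        Submodule.mem_iSup_of_mem s (LinearMap.mem_range_self _ x)
  · -- bracket
    intro i j x hx y hy
    change x ∈ LinearMap.range (π i) at hx
    change y ∈ LinearMap.range (π j) at hy
    show ⁅x, y⁆ ∈ LinearMap.range (π (i + j))
    have hspan : ∀ k, LinearMap.range (π k) =
        Submodule.span K (Set.range fun a => π k (b a)) := by
      intro k
      conv_lhs => rw [LinearMap.range_eq_map, ← b.span_eq, Submodule.map_span,
        ← Set.range_comp]
      rfl
    have key : ∀ a c : ι, ⁅π i (b a), π j (b c)⁆ ∈ LinearMap.range (π (i+j)) := by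
      intro a c
      by_cases hi : i ∈ S
      · by_cases hj : j ∈ S
        · rw [hrangemem]
          have hcol : ∀ k (a : ι), ⇑(b.repr (π k (b a))) = fun a' => P k a' a := by
            intro k a
            rw [hπ]
            rw [repr_toLin]
            funext a'
            simp [hb, Matrix.mulVec, dotProduct, Finsupp.single_apply, Module.Basis.repr_self]
          have hrepr : ⇑(b.repr ⁅π i (b a), π j (b c)⁆) =
              Br K e (fun a' => P i a' a) (fun b' => P j b' c) := by
            funext d
            rw [hb]
            rw [bracket_repr]
            rw [← hb, hcol, hcol]
          apply b.repr.injective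
          apply DFunLike.coe_injective
          show ⇑(b.repr (Matrix.toLin b b (P (i+j)) _)) = _
          rw [hb, repr_toLin, ← hb, hrepr, h3 i hi j hj a c]
        · have hz : π j (b c) = 0 := by
            show Matrix.toLin b b (P j) (b c) = 0
            rw [h0 j hj]; simp
          rw [hz, lie_zero]
          exact Submodule.zero_mem _
      · have hz : π i (b a) = 0 := by
          show Matrix.toLin b b (P i) (b a) = 0
          rw [h0 i hi]; simp
        rw [hz, zero_lie]
        exact Submodule.zero_mem _
    rw [hspan i] at hx
    rw [hspan j] at hy
    induction hx using Submodule.span_induction with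
    | mem x hx =>
      obtain ⟨a, rfl⟩ := hx
      induction hy using Submodule.span_induction with
      | mem y hy => obtain ⟨c, rfl⟩ := hy; exact key a c
      | zero => rw [lie_zero]; exact Submodule.zero_mem _
      | add y z _ _ hy hz => rw [lie_add]; exact Submodule.add_mem _ hy hz
      | smul t y _ hy => rw [lie_smul]; exact Submodule.smul_mem _ t hy
    | zero => rw [zero_lie]; exact Submodule.zero_mem _
    | add x z _ _ hx' hz => rw [add_lie]; exact Submodule.add_mem _ hx' hz
    | smul t x _ hx' => rw [smul_lie]; exact Submodule.smul_mem _ t hx'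

end FromMat


lemma sum_mulVec' {α m' n' R : Type*} [Fintype n'] [NonUnitalNonAssocSemiring R]
    (s : Finset α) (M : α → Matrix m' n' R) (v : n' → R) :
    (∑ a ∈ s, M a).mulVec v = ∑ a ∈ s, (M a).mulVec v := by
  funext d
  simp only [Matrix.mulVec, dotProduct, Matrix.sum_apply, Finset.sum_mul,
    Finset.sum_apply]
  rw [Finset.sum_comm]

lemma center_of_matrices (e : Module.Basis ι ℚ 𝔫) {P0 : Matrix ι ι K} {B : Option ι → Matrix ι ι K}
    (hP : P0 * P0 = P0) (hB : CentEqB K e P0 B) :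
    LinearMap.range (Matrix.toLin (bK K e) (bK K e) P0) ⊓
      (LieAlgebra.center K (K ⊗[ℚ] 𝔫)).toSubmodule = ⊥ := by
  classical
  rw [eq_bot_iff]
  rintro x hx
  obtain ⟨hx0, hxz⟩ := Submodule.mem_inf.mp hx
  set b := bK K e with hbb
  have hfix : Matrix.toLin b b P0 x = x := by
    obtain ⟨y, rfl⟩ := hx0
    rw [← LinearMap.comp_apply, ← Matrix.toLin_mul b b b, hP]
  have hξ : P0.mulVec (b.repr x) = ⇑(b.repr x) := by
    rw [← repr_toLin K e P0 x, hfix]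
  have hz : ∀ c : ι, (Cm K e c).mulVec (b.repr x) = 0 := by
    intro c
    have hcent : ⁅x, b c⁆ = 0 := by
      have := (LieModule.mem_maxTrivSubmodule K (K ⊗[ℚ] 𝔫) (K ⊗[ℚ] 𝔫) x).mp hxz (b c)
      rw [← lie_skew, this, neg_zero]
    rw [← repr_lie_bK K e x c, hcent]
    simp
  have hB' : B none * (1 - P0) + ∑ c, B (some c) * Cm K e c = 1 := hB
  have hone : (1 : Matrix ι ι K).mulVec (b.repr x) = 0 := by
    rw [← hB', Matrix.add_mulVec, ← Matrix.mulVec_mulVec, Matrix.sub_mulVec,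
      Matrix.one_mulVec, hξ, sub_self, Matrix.mulVec_zero, sum_mulVec']
    rw [Finset.sum_congr rfl (fun c _ => by
      rw [← Matrix.mulVec_mulVec, hz c, Matrix.mulVec_zero])]
    simp
  have : ⇑(b.repr x) = 0 := by rw [← Matrix.one_mulVec (⇑(b.repr x))]; exact hone
  have hx0' : b.repr x = 0 := DFunLike.coe_injective this
  simp only [Submodule.mem_bot]
  exact b.repr.map_eq_zero_iff.mp hx0'


lemma toMatrix_adR (e : Module.Basis ι ℚ 𝔫) (c : ι) :
    LinearMap.toMatrix (bK K e) (bK K e) (-(LieAlgebra.ad K (K ⊗[ℚ] 𝔫) (bK K e c))) =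
      Cm K e c := by
  classical
  ext d a
  have h0 : ((bK K e).repr ⁅bK K e a, bK K e c⁆) d = Cm K e c d a := by
    have h1 := congrFun (repr_lie_bK K e (bK K e a) c) d
    rw [h1]
    simp [Matrix.mulVec, dotProduct, Module.Basis.repr_self, Finsupp.single_apply,
      mul_ite, mul_one, mul_zero, Finset.sum_ite_eq]
  rw [LinearMap.toMatrix_apply, LinearMap.neg_apply, LieAlgebra.ad_apply, ← lie_skew,
    neg_neg]
  exact h0

lemma matrices_of_grading (e : Module.Basis ι ℚ 𝔫) {p : ℤ → Submodule K (K ⊗[ℚ] 𝔫)}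
    (hp : IsLieGrading K (K ⊗[ℚ] 𝔫) p)
    (hz : p 0 ⊓ (LieAlgebra.center K (K ⊗[ℚ] 𝔫)).toSubmodule = ⊥) :
    ∃ (S : Finset ℤ) (P : ℤ → Matrix ι ι K) (B : Option ι → Matrix ι ι K),
      GradEqs K e S P ∧ CentEqB K e (P 0) B ∧ (p 0 = ⊥ → 0 ∉ S) := by
  classical
  haveI : FiniteDimensional K (K ⊗[ℚ] 𝔫) := Module.Finite.of_basis (bK K e)
  haveI : Fintype {i : ℤ // p i ≠ ⊥} :=
    (hp.1.submodule_iSupIndep).fintypeNeBotOfFiniteDimensional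
  haveI : Fintype ↥{i : ℤ | p i ≠ ⊥} :=
    (hp.1.submodule_iSupIndep).fintypeNeBotOfFiniteDimensional
  set b := bK K e with hbb
  set S : Finset ℤ := Set.toFinset {i | p i ≠ ⊥} with hSS
  have hS : ∀ k, k ∈ S ↔ p k ≠ ⊥ := fun k => by rw [hSS, Set.mem_toFinset]; rfl
  set E := LinearEquiv.ofBijective (DirectSum.coeLinearMap p) hp.1 with hE
  set π : ℤ → ((K ⊗[ℚ] 𝔫) →ₗ[K] (K ⊗[ℚ] 𝔫)) := fun k =>
    (p k).subtype ∘ₗ (DirectSum.component K ℤ (fun i => ↥(p i)) k) ∘ₗ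
      (E.symm : (K ⊗[ℚ] 𝔫) →ₗ[K] ⨁ i, ↥(p i)) with hπdef
  have hπ_apply : ∀ k x, π k x = ((E.symm x) k : K ⊗[ℚ] 𝔫) := fun k x => rfl
  have hπ_mem : ∀ k x, π k x ∈ p k := fun k x => ((E.symm x) k).2
  have hπ_of_mem : ∀ {t : ℤ} {x : K ⊗[ℚ] 𝔫}, x ∈ p t → ∀ k,
      π k x = if k = t then x else 0 := by
    intro t x hx k
    rw [hπ_apply]
    by_cases hk : k = t
    · subst hk
      rw [if_pos rfl, hp.1.ofBijective_coeLinearMap_of_mem hx]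
    · rw [if_neg hk]
      have h2 : (E.symm x) k = 0 :=
        hp.1.ofBijective_coeLinearMap_of_mem_ne (fun h => hk h.symm) hx
      rw [h2]; rfl
  have hbotS : ∀ i ∉ S, ∀ m : ⨁ i, ↥(p i), m i = 0 := by
    intro i hi m
    have hbot : p i = ⊥ := not_not.mp (fun h => hi ((hS i).mpr h))
    exact Subtype.ext ((Submodule.eq_bot_iff (p i)).mp hbot _ (m i).2)
  have hπ_sum : ∀ x, ∑ s ∈ S, π s x = x := by
    intro x
    have hx : DirectSum.coeLinearMap p (E.symm x) = x := E.apply_symm_apply x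
    set m := E.symm x with hm
    have hsupp : m.support ⊆ S := by
      intro i hi
      by_contra hiS
      exact (DFinsupp.mem_support_iff.mp hi) (hbotS i hiS m)
    have hrw : ∀ s ∈ S, π s x = ((m s : K ⊗[ℚ] 𝔫)) := fun s _ => rfl
    rw [Finset.sum_congr rfl hrw]
    have hsub : ∑ s ∈ S, ((m s : K ⊗[ℚ] 𝔫)) = ∑ s ∈ m.support, ((m s : K ⊗[ℚ] 𝔫)) := by
      refine (Finset.sum_subset hsupp ?_).symm
      intro s _ hs
      rw [DFinsupp.notMem_support_iff.mp hs]
      rfl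
    rw [hsub, ← hx]
    conv_rhs => rw [← DirectSum.sum_support_of m]
    rw [map_sum]
    exact Finset.sum_congr rfl fun i _ => (DirectSum.coeLinearMap_of _ _ _).symm
  have hcomp : ∀ s t, π s ∘ₗ π t = if s = t then π s else 0 := by
    intro s t
    refine LinearMap.ext fun x => ?_
    rw [LinearMap.comp_apply, hπ_of_mem (hπ_mem t x) s]
    by_cases h : s = t
    · subst h; simp
    · simp [h]
  set P : ℤ → Matrix ι ι K := fun k =>
    if k ∈ S then LinearMap.toMatrix b b (π k) else 0 with hPdef
  have hP_inS : ∀ k ∈ S, P k = LinearMap.toMatrix b b (π k) := fun k hk => if_pos hk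
  -- the B matrices
  set adR : ι → ((K ⊗[ℚ] 𝔫) →ₗ[K] (K ⊗[ℚ] 𝔫)) := fun c =>
    -(LieAlgebra.ad K (K ⊗[ℚ] 𝔫) (b c)) with hadRdef
  have hadR : ∀ c x, adR c x = ⁅x, b c⁆ := by
    intro c x
    show -⁅b c, x⁆ = ⁅x, b c⁆
    exact lie_skew x (b c)
  set π0' : (K ⊗[ℚ] 𝔫) →ₗ[K] (K ⊗[ℚ] 𝔫) := Matrix.toLin b b (P 0) with hπ0'def
  have hπ0' : ∀ x, π0' x = if (0:ℤ) ∈ S then π 0 x else 0 := by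
    intro x
    by_cases h : (0:ℤ) ∈ S
    · rw [if_pos h, hπ0'def, hP_inS 0 h, Matrix.toLin_toMatrix]
    · rw [if_neg h, hπ0'def, hPdef]
      simp only [if_neg h, map_zero, LinearMap.zero_apply]
  set fo : Option ι → ((K ⊗[ℚ] 𝔫) →ₗ[K] (K ⊗[ℚ] 𝔫)) := fun o =>
    Option.casesOn o ((LinearMap.id : (K ⊗[ℚ] 𝔫) →ₗ[K] (K ⊗[ℚ] 𝔫)) - π0') adR with hfodef
  have hfo_none : fo none = (LinearMap.id : (K ⊗[ℚ] 𝔫) →ₗ[K] (K ⊗[ℚ] 𝔫)) - π0' := rfl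
  have hfo_some : ∀ c, fo (some c) = adR c := fun _ => rfl
  set F : (K ⊗[ℚ] 𝔫) →ₗ[K] (Option ι → K ⊗[ℚ] 𝔫) := LinearMap.pi fo with hFdef
  have hF_app : ∀ (x) (o : Option ι), F x o = fo o x := fun x o => rfl
  have hFinj : LinearMap.ker F = ⊥ := by
    rw [LinearMap.ker_eq_bot']
    intro x hF
    have hnone : x = π0' x := by
      have h3 : ((LinearMap.id : (K ⊗[ℚ] 𝔫) →ₗ[K] (K ⊗[ℚ] 𝔫)) - π0') x = 0 := by
        rw [← hfo_none, ← hF_app x none, hF]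
        rfl
      rw [LinearMap.sub_apply, LinearMap.id_apply, sub_eq_zero] at h3
      exact h3
    have hsome : ∀ c, ⁅x, b c⁆ = 0 := by
      intro c
      have h4 : adR c x = 0 := by
        rw [← hfo_some c, ← hF_app x (some c), hF]
        rfl
      rwa [hadR] at h4
    by_cases h0 : (0:ℤ) ∈ S
    · have hx0 : x ∈ p 0 := by
        rw [hnone, hπ0', if_pos h0]
        exact hπ_mem 0 x
      have hxz : x ∈ (LieAlgebra.center K (K ⊗[ℚ] 𝔫)).toSubmodule := by
        rw [LieSubmodule.mem_toSubmodule, LieModule.mem_maxTrivSubmodule]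
        intro y
        have hxy : ⁅x, y⁆ = 0 := by
          conv_lhs => rw [← Module.Basis.sum_repr b y]
          rw [lie_sum']
          refine Finset.sum_eq_zero fun c _ => ?_
          rw [lie_smul, hsome c, smul_zero]
        rw [← lie_skew, hxy, neg_zero]
      have hmem : x ∈ p 0 ⊓ (LieAlgebra.center K (K ⊗[ℚ] 𝔫)).toSubmodule :=
        Submodule.mem_inf.mpr ⟨hx0, hxz⟩
      rw [hz] at hmem
      simpa using hmem
    · rw [hnone, hπ0', if_neg h0]
  obtain ⟨G, hG⟩ := F.exists_leftInverse_of_injective hFinj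
  set B : Option ι → Matrix ι ι K := fun o =>
    LinearMap.toMatrix b b (G ∘ₗ LinearMap.single K (fun _ : Option ι => K ⊗[ℚ] 𝔫) o)
    with hBdef
  refine ⟨S, P, B, ⟨fun k hk => if_neg hk, ?h1, ?h2, ?h3⟩, ?hB, ?hvs⟩
  case h1 =>
    rw [Finset.sum_congr rfl hP_inS, ← map_sum]
    have hid : (∑ s ∈ S, π s) = LinearMap.id := by
      refine LinearMap.ext fun x => ?_
      rw [LinearMap.sum_apply]
      exact hπ_sum x
    rw [hid, LinearMap.toMatrix_id]
  case h2 =>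
    intro s t
    by_cases hs : s ∈ S
    · by_cases ht : t ∈ S
      · rw [hP_inS s hs, hP_inS t ht, ← LinearMap.toMatrix_comp b b b, hcomp]
        by_cases h : s = t
        · rw [if_pos h, if_pos h]
        · rw [if_neg h, if_neg h, map_zero]
      · rw [hPdef]
        simp only [if_neg ht, mul_zero]
        by_cases h : s = t
        · subst h; simp [if_neg ht]
        · rw [if_neg h]
    · rw [hPdef]
      simp only [if_neg hs, zero_mul]
      by_cases h : s = t
      · subst h; simp [if_neg hs]
      · rw [if_neg h]
  case h3 =>
    intro i hi j hj a c
    have hcol : ∀ k, k ∈ S → ∀ a : ι, (fun a' => P k a' a) = ⇑(b.repr (π k (b a))) := by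
      intro k hk a
      funext a'
      rw [hP_inS k hk, LinearMap.toMatrix_apply]
    have hu : ⁅π i (b a), π j (b c)⁆ ∈ p (i + j) :=
      hp.2 i j _ (hπ_mem i (b a)) _ (hπ_mem j (b c))
    have hw : Br K e (fun a' => P i a' a) (fun b' => P j b' c) =
        ⇑(b.repr ⁅π i (b a), π j (b c)⁆) := by
      funext d
      rw [hcol i hi, hcol j hj, hbb]
      exact (bracket_repr K e _ _ d).symm
    rw [hw]
    by_cases hij : (i + j) ∈ S
    · have h1 : (P (i+j)).mulVec ⇑(b.repr ⁅π i (b a), π j (b c)⁆) =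
          ⇑(b.repr (Matrix.toLin b b (P (i+j)) ⁅π i (b a), π j (b c)⁆)) := by
        rw [hbb]; exact (repr_toLin K e _ _).symm
      rw [h1, hP_inS _ hij, Matrix.toLin_toMatrix, hπ_of_mem hu, if_pos rfl]
    · have hbot : p (i+j) = ⊥ := not_not.mp (fun h => hij ((hS _).mpr h))
      have hu0 : ⁅π i (b a), π j (b c)⁆ = 0 := by
        rw [hbot] at hu
        simpa using hu
      rw [hu0]
      simp only [map_zero, Finsupp.coe_zero, Matrix.mulVec_zero]
  case hB =>
    show B none * (1 - P 0) + ∑ c, B (some c) * Cm K e c = 1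
    have e1 : (1 : Matrix ι ι K) - P 0 = LinearMap.toMatrix b b (fo none) := by
      rw [hfo_none, map_sub, LinearMap.toMatrix_id, hπ0'def, LinearMap.toMatrix_toLin]
    have e2 : ∀ c, Cm K e c = LinearMap.toMatrix b b (fo (some c)) := by
      intro c
      rw [hfo_some c, hadRdef, hbb, toMatrix_adR]
    have hGsum : (G ∘ₗ LinearMap.single K (fun _ : Option ι => K ⊗[ℚ] 𝔫) none) ∘ₗ fo none +
        ∑ c, (G ∘ₗ LinearMap.single K (fun _ : Option ι => K ⊗[ℚ] 𝔫) (some c)) ∘ₗ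
          fo (some c) = LinearMap.id := by
      refine LinearMap.ext fun x => ?_
      rw [LinearMap.add_apply, LinearMap.sum_apply]
      simp only [LinearMap.comp_apply]
      rw [← map_sum, ← map_add]
      have hsum : (LinearMap.single K (fun _ : Option ι => K ⊗[ℚ] 𝔫) none) (fo none x) +
          ∑ c, (LinearMap.single K (fun _ : Option ι => K ⊗[ℚ] 𝔫) (some c))
            (fo (some c) x) = F x := by
        rw [← Fintype.sum_option (fun o =>
          (LinearMap.single K (fun _ : Option ι => K ⊗[ℚ] 𝔫) o) (fo o x))]
        show (∑ o : Option ι, Pi.single o (fo o x)) = F x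
        rw [Finset.univ_sum_single (fun o => fo o x)]
        rfl
      rw [hsum, ← LinearMap.comp_apply, hG]
    calc B none * (1 - P 0) + ∑ c, B (some c) * Cm K e c
        = LinearMap.toMatrix b b
            ((G ∘ₗ LinearMap.single K (fun _ : Option ι => K ⊗[ℚ] 𝔫) none) ∘ₗ fo none +
             ∑ c, (G ∘ₗ LinearMap.single K (fun _ : Option ι => K ⊗[ℚ] 𝔫) (some c)) ∘ₗ
               fo (some c)) := by
          rw [map_add, map_sum]
          rw [e1, hBdef, ← LinearMap.toMatrix_comp b b b]
          exact congrArg _ (Finset.sum_congr rfl fun c _ => by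
            rw [e2 c, ← LinearMap.toMatrix_comp b b b])
      _ = 1 := by rw [hGsum, LinearMap.toMatrix_id]
  case hvs =>
    intro hbot h0S
    exact ((hS 0).mp h0S) hbot



lemma special_iff (e : Module.Basis ι ℚ 𝔫) :
    HasSpecialGrading K (K ⊗[ℚ] 𝔫) ↔
      ∃ S : Finset ℤ, ∃ P B, GradEqs K e S P ∧ CentEqB K e (P 0) B := by
  constructor
  · rintro ⟨p, hp, hz⟩
    obtain ⟨S, P, B, hG, hC, -⟩ := matrices_of_grading K e hp hz
    exact ⟨S, P, B, hG, hC⟩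
  · rintro ⟨S, P, B, hG, hC⟩
    obtain ⟨hgrad, -⟩ := grading_of_matrices K e hG
    refine ⟨_, hgrad, ?_⟩
    refine center_of_matrices K e ?_ hC
    have := hG.2.2.1 0 0
    simpa using this

lemma vspecial_iff (e : Module.Basis ι ℚ 𝔫) :
    HasVerySpecialGrading K (K ⊗[ℚ] 𝔫) ↔
      ∃ S : Finset ℤ, 0 ∉ S ∧ ∃ P B, GradEqs K e S P ∧ CentEqB K e (P 0) B := by
  constructor
  · rintro ⟨p, hp, h0⟩
    have hz : p 0 ⊓ (LieAlgebra.center K (K ⊗[ℚ] 𝔫)).toSubmodule = ⊥ := by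
      rw [h0]
      exact bot_inf_eq _
    obtain ⟨S, P, B, hG, hC, hvs⟩ := matrices_of_grading K e hp hz
    exact ⟨S, hvs h0, P, B, hG, hC⟩
  · rintro ⟨S, h0S, P, B, hG, hC⟩
    obtain ⟨hgrad, hbot⟩ := grading_of_matrices K e hG
    exact ⟨_, hgrad, hbot 0 h0S⟩


/-- variables of the polynomial system -/
abbrev PVar (ι : Type*) (S : Finset ℤ) : Type _ := ({s // s ∈ S} ⊕ Option ι) × ι × ι

variable (ι) in
noncomputable def PM (S : Finset ℤ) (k : ℤ) : Matrix ι ι (MvPolynomial (PVar ι S) ℚ) :=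
  if h : k ∈ S then Matrix.of (fun a b => MvPolynomial.X (Sum.inl ⟨k, h⟩, a, b)) else 0

variable (ι) in
noncomputable def BM (S : Finset ℤ) (o : Option ι) : Matrix ι ι (MvPolynomial (PVar ι S) ℚ) :=
  Matrix.of fun a b => MvPolynomial.X (Sum.inr o, a, b)

/-- index type for the equations -/
abbrev EIx (ι : Type*) (S : Finset ℤ) : Type _ :=
  (ι × ι) ⊕ (({s // s ∈ S} × {s // s ∈ S} × ι × ι) ⊕
    (({s // s ∈ S} × {s // s ∈ S} × ι × ι × ι) ⊕ (ι × ι)))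

noncomputable def polys (e : Module.Basis ι ℚ 𝔫) (S : Finset ℤ) : EIx ι S → MvPolynomial (PVar ι S) ℚ
  | .inl (a, b) => (∑ s : {s // s ∈ S}, PM ι S s.1) a b - (1 : Matrix ι ι _) a b
  | .inr (.inl (s, t, a, b)) =>
      (PM ι S s.1 * PM ι S t.1) a b - (if s.1 = t.1 then PM ι S s.1 else 0) a b
  | .inr (.inr (.inl (i, j, a, c, d))) =>
      (PM ι S (i.1 + j.1)).mulVec
        (Br _ e (fun a' => PM ι S i.1 a' a) (fun b' => PM ι S j.1 b' c)) d -
      Br _ e (fun a' => PM ι S i.1 a' a) (fun b' => PM ι S j.1 b' c) d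
  | .inr (.inr (.inr (a, b))) =>
      (BM ι S none * (1 - PM ι S 0) + ∑ c, BM ι S (some c) * Cm _ e c) a b -
        (1 : Matrix ι ι _) a b

variable (K : Type*) [Field K] [Algebra ℚ K]

/-- decoded matrices from a point -/
noncomputable def Pv (S : Finset ℤ) (v : PVar ι S → K) (k : ℤ) : Matrix ι ι K :=
  if h : k ∈ S then Matrix.of (fun a b => v (Sum.inl ⟨k, h⟩, a, b)) else 0

noncomputable def Bv (S : Finset ℤ) (v : PVar ι S → K) (o : Option ι) : Matrix ι ι K :=
  Matrix.of fun a b => v (Sum.inr o, a, b)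

open MvPolynomial in
lemma aeval_PM (S : Finset ℤ) (v : PVar ι S → K) (k : ℤ) (a b : ι) :
    aeval v (PM ι S k a b) = Pv K S v k a b := by
  rw [PM, Pv]
  by_cases h : k ∈ S
  · rw [dif_pos h, dif_pos h]
    simp
  · rw [dif_neg h, dif_neg h]
    simp

open MvPolynomial in
lemma aeval_Br (S : Finset ℤ) (e : Module.Basis ι ℚ 𝔫) (v : PVar ι S → K)
    (x y : ι → MvPolynomial (PVar ι S) ℚ) (d : ι) :
    aeval v (Br _ e x y d) =
      Br K e (fun i => aeval v (x i)) (fun i => aeval v (y i)) d := by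
  rw [Br, Br, map_sum]
  refine Finset.sum_congr rfl fun a _ => ?_
  rw [map_sum]
  refine Finset.sum_congr rfl fun c _ => ?_
  rw [map_mul, map_mul]
  congr 1
  exact (aeval v).commutes _

open MvPolynomial in
lemma aeval_BM (S : Finset ℤ) (v : PVar ι S → K) (o : Option ι) (a b : ι) :
    aeval v (BM ι S o a b) = Bv K S v o a b := by
  rw [BM, Bv]
  simp

open MvPolynomial in
lemma aeval_mul_apply (S : Finset ℤ) (v : PVar ι S → K)
    (M N : Matrix ι ι (MvPolynomial (PVar ι S) ℚ)) (M' N' : Matrix ι ι K)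
    (hM : ∀ a b, aeval v (M a b) = M' a b) (hN : ∀ a b, aeval v (N a b) = N' a b) (a b : ι) :
    aeval v ((M * N) a b) = (M' * N') a b := by
  rw [Matrix.mul_apply, Matrix.mul_apply, map_sum]
  exact Finset.sum_congr rfl fun k _ => by rw [map_mul, hM, hN]

open MvPolynomial in
lemma eval_iff (S : Finset ℤ) (e : Module.Basis ι ℚ 𝔫) (v : PVar ι S → K) :
    (∀ q, aeval v (polys e S q) = 0) ↔
      (GradEqs K e S (Pv K S v) ∧ CentEqB K e (Pv K S v 0) (Bv K S v)) := by
  classical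
  have hBr2 : ∀ (i j : ℤ) (a c d : ι),
      aeval v (Br _ e (fun a' => PM ι S i a' a) (fun b' => PM ι S j b' c) d) =
        Br K e (fun a' => Pv K S v i a' a) (fun b' => Pv K S v j b' c) d := by
    intro i j a c d
    rw [aeval_Br]
    simp only [aeval_PM]
  have E1 : ∀ a b : ι, aeval v (polys e S (.inl (a, b))) =
      (∑ s ∈ S, Pv K S v s) a b - (1 : Matrix ι ι K) a b := by
    intro a b
    rw [polys, map_sub]
    congr 1
    · rw [Matrix.sum_apply, map_sum, ← Finset.sum_coe_sort S (fun s => Pv K S v s),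
        Matrix.sum_apply]
      exact Finset.sum_congr rfl fun s _ => aeval_PM K S v s.1 a b
    · rw [Matrix.one_apply, Matrix.one_apply, apply_ite (aeval v), map_one, map_zero]
  have E2 : ∀ (s t : {s // s ∈ S}) (a b : ι), aeval v (polys e S (.inr (.inl (s, t, a, b)))) =
      (Pv K S v s.1 * Pv K S v t.1) a b - (if s.1 = t.1 then Pv K S v s.1 else 0) a b := by
    intro s t a b
    rw [polys, map_sub]
    congr 1
    · exact aeval_mul_apply K S v _ _ _ _ (aeval_PM K S v s.1) (aeval_PM K S v t.1) a b
    · by_cases hst : s.1 = t.1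
      · rw [if_pos hst, if_pos hst, aeval_PM]
      · rw [if_neg hst, if_neg hst, Matrix.zero_apply, Matrix.zero_apply, map_zero]
  have E3 : ∀ (i j : {s // s ∈ S}) (a c d : ι),
      aeval v (polys e S (.inr (.inr (.inl (i, j, a, c, d))))) =
      (Pv K S v (i.1 + j.1)).mulVec
        (Br K e (fun a' => Pv K S v i.1 a' a) (fun b' => Pv K S v j.1 b' c)) d -
      Br K e (fun a' => Pv K S v i.1 a' a) (fun b' => Pv K S v j.1 b' c) d := by
    intro i j a c d
    rw [polys, map_sub]
    congr 1
    · simp only [Matrix.mulVec, dotProduct]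
      rw [map_sum]
      refine Finset.sum_congr rfl fun a' _ => ?_
      rw [map_mul, aeval_PM, hBr2]
    · rw [hBr2]
  have E4 : ∀ a b : ι, aeval v (polys e S (.inr (.inr (.inr (a, b))))) =
      (Bv K S v none * (1 - Pv K S v 0) + ∑ c, Bv K S v (some c) * Cm K e c) a b -
        (1 : Matrix ι ι K) a b := by
    intro a b
    rw [polys, map_sub]
    congr 1
    · rw [Matrix.add_apply, Matrix.add_apply, map_add]
      congr 1
      · refine aeval_mul_apply K S v _ _ _ _ (aeval_BM K S v none) ?_ a b
        intro a' b'
        rw [Matrix.sub_apply, Matrix.sub_apply, map_sub, aeval_PM]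
        congr 1
        rw [Matrix.one_apply, Matrix.one_apply, apply_ite (aeval v), map_one, map_zero]
      · rw [Matrix.sum_apply, Matrix.sum_apply, map_sum]
        refine Finset.sum_congr rfl fun c _ => ?_
        refine aeval_mul_apply K S v _ _ _ _ (aeval_BM K S v (some c)) ?_ a b
        intro a' b'
        rw [Cm, Cm, Matrix.of_apply, Matrix.of_apply]
        exact (aeval v).commutes _
    · rw [Matrix.one_apply, Matrix.one_apply, apply_ite (aeval v), map_one, map_zero]
  constructor
  · intro h
    have h0' : ∀ k ∉ S, Pv K S v k = 0 := fun k hk => dif_neg hk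
    refine ⟨⟨h0', ?_, ?_, ?_⟩, ?_⟩
    · ext a b
      have := h (.inl (a, b))
      rw [E1 a b, sub_eq_zero] at this
      exact this
    · intro s t
      by_cases hs : s ∈ S
      · by_cases ht : t ∈ S
        · ext a b
          have := h (.inr (.inl (⟨s, hs⟩, ⟨t, ht⟩, a, b)))
          rw [E2 ⟨s, hs⟩ ⟨t, ht⟩ a b, sub_eq_zero] at this
          exact this
        · rw [h0' t ht, mul_zero]
          by_cases hst : s = t
          · subst hst; simp [h0' s ht]
          · rw [if_neg hst]
      · rw [h0' s hs, zero_mul]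
        by_cases hst : s = t
        · subst hst; simp [h0' s hs]
        · rw [if_neg hst]
    · intro i hi j hj a c
      funext d
      have := h (.inr (.inr (.inl (⟨i, hi⟩, ⟨j, hj⟩, a, c, d))))
      rw [E3 ⟨i, hi⟩ ⟨j, hj⟩ a c d, sub_eq_zero] at this
      exact this
    · show _ = (1 : Matrix ι ι K)
      ext a b
      have := h (.inr (.inr (.inr (a, b))))
      rw [E4 a b, sub_eq_zero] at this
      exact this
  · rintro ⟨⟨h0', h1', h2', h3'⟩, hC⟩
    intro q
    match q with
    | .inl (a, b) =>
      rw [E1 a b, h1', sub_self]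
    | .inr (.inl (s, t, a, b)) =>
      rw [E2 s t a b, h2' s.1 t.1]
      by_cases hst : s.1 = t.1 <;> simp [hst]
    | .inr (.inr (.inl (i, j, a, c, d))) =>
      rw [E3 i j a c d]
      have := h3' i.1 i.2 j.1 j.2 a c
      rw [congrFun this d, sub_self]
    | .inr (.inr (.inr (a, b))) =>
      rw [E4 a b]
      have hC' : (Bv K S v none * (1 - Pv K S v 0) + ∑ c, Bv K S v (some c) * Cm K e c) =
          1 := hC
      rw [hC', sub_self]



open MvPolynomial in
lemma msol_point (S : Finset ℤ) (e : Module.Basis ι ℚ 𝔫) :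
    (∃ P B, GradEqs K e S P ∧ CentEqB K e (P 0) B) ↔
      ∃ v : PVar ι S → K, ∀ q, aeval v (polys e S q) = 0 := by
  constructor
  · rintro ⟨P, B, hG, hC⟩
    classical
    set v : PVar ι S → K := fun w => match w with
      | (.inl s, a, b) => P s.1 a b
      | (.inr o, a, b) => B o a b
      with hvdef
    have hPv : Pv K S v = P := by
      funext k
      rw [Pv]
      by_cases h : k ∈ S
      · rw [dif_pos h]
        ext a b
        rfl
      · rw [dif_neg h]
        exact (hG.1 k h).symm
    have hBv : Bv K S v = B := by
      funext o
      ext a b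
      rfl
    refine ⟨v, ?_⟩
    rw [eval_iff, hPv, hBv]
    exact ⟨hG, hC⟩
  · rintro ⟨v, hv⟩
    obtain ⟨hG, hC⟩ := (eval_iff K S e v).mp hv
    exact ⟨_, _, hG, hC⟩


open MvPolynomial in
lemma transfer {σ τ : Type*} [Fintype σ] (f : τ → MvPolynomial σ ℚ) :
    (∃ v : σ → ℂ, ∀ q, aeval v (f q) = 0) ↔
      (∃ v : σ → AlgebraicClosure ℚ, ∀ q, aeval v (f q) = 0) := by
  classical
  set Qb := AlgebraicClosure ℚ
  haveI : Algebra.IsAlgebraic ℚ Qb := by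
    convert AlgebraicClosure.isAlgebraic ℚ
    · rfl
    · exact Subsingleton.elim _ _
  have j : Qb →ₐ[ℚ] ℂ := IsAlgClosed.lift
  constructor
  · rintro ⟨v, hv⟩
    set L : Ideal (MvPolynomial σ Qb) :=
      Ideal.span (Set.range fun q => MvPolynomial.map (algebraMap ℚ Qb) (f q)) with hL
    have hLne : L ≠ ⊤ := by
      intro htop
      set φ : MvPolynomial σ Qb →+* ℂ := eval₂Hom (j : Qb →+* ℂ) v with hφ
      have hker : L ≤ RingHom.ker φ := by
        rw [hL, Ideal.span_le]
        rintro _ ⟨q, rfl⟩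
        rw [SetLike.mem_coe, RingHom.mem_ker, hφ, coe_eval₂Hom, eval₂_map]
        have hcomp : (j : Qb →+* ℂ).comp (algebraMap ℚ Qb) = algebraMap ℚ ℂ := by
          ext1 r
          exact j.commutes r
        rw [hcomp]
        exact hv q
      have h1 : (1 : MvPolynomial σ Qb) ∈ RingHom.ker φ := hker (htop ▸ Submodule.mem_top)
      rw [RingHom.mem_ker, map_one] at h1
      exact one_ne_zero h1
    have hne : (MvPolynomial.zeroLocus Qb L).Nonempty := by
      rcases Set.eq_empty_or_nonempty (MvPolynomial.zeroLocus Qb L) with hemp | h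
      · exfalso
        have hrad := MvPolynomial.vanishingIdeal_zeroLocus_eq_radical (K := AlgebraicClosure ℚ) L
        rw [hemp, MvPolynomial.vanishingIdeal_empty] at hrad
        have h1 : (1 : MvPolynomial σ Qb) ∈ L.radical := by rw [← hrad]; exact Submodule.mem_top
        obtain ⟨n, hn⟩ := h1
        rw [one_pow] at hn
        exact hLne ((Ideal.eq_top_iff_one L).mpr hn)
      · exact h
    obtain ⟨x, hx⟩ := hne
    refine ⟨x, fun q => ?_⟩
    have hq : MvPolynomial.map (algebraMap ℚ Qb) (f q) ∈ L :=
      Ideal.subset_span ⟨q, rfl⟩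
    rw [MvPolynomial.aeval_def, ← MvPolynomial.eval_map]
    exact hx _ hq
  · rintro ⟨v, hv⟩
    refine ⟨fun i => j (v i), fun q => ?_⟩
    rw [← MvPolynomial.comp_aeval_apply (f := v) j (f q), hv q, map_zero]

end XG

/-- For a finite-dimensional Lie algebra `𝔫` over `ℚ`:
(i) `ℂ ⊗ 𝔫` admits a special grading iff `ℚ̄ ⊗ 𝔫` does; and
(ii) `ℂ ⊗ 𝔫` admits a very special grading iff `ℚ̄ ⊗ 𝔫` does. -/
theorem hasSpecialGrading_complex_iff_algebraicClosure
    {𝔫 : Type*} [LieRing 𝔫] [LieAlgebra ℚ 𝔫] [FiniteDimensional ℚ 𝔫] :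
    (HasSpecialGrading ℂ (ℂ ⊗[ℚ] 𝔫) ↔
      HasSpecialGrading (AlgebraicClosure ℚ) ((AlgebraicClosure ℚ) ⊗[ℚ] 𝔫)) ∧
    (HasVerySpecialGrading ℂ (ℂ ⊗[ℚ] 𝔫) ↔
      HasVerySpecialGrading (AlgebraicClosure ℚ) ((AlgebraicClosure ℚ) ⊗[ℚ] 𝔫)) := by
  classical
  set e := Module.finBasis ℚ 𝔫
  constructor
  · rw [XG.special_iff ℂ e, XG.special_iff (AlgebraicClosure ℚ) e]
    refine exists_congr fun S => ?_
    rw [XG.msol_point ℂ S e, XG.msol_point (AlgebraicClosure ℚ) S e]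
    exact XG.transfer _
  · rw [XG.vspecial_iff ℂ e, XG.vspecial_iff (AlgebraicClosure ℚ) e]
    refine exists_congr fun S => and_congr_right fun _ => ?_
    rw [XG.msol_point ℂ S e, XG.msol_point (AlgebraicClosure ℚ) S e]
    exact XG.transfer _
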